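/- arXiv:math/0611261 — 4 statements merged into one kernel-verified Lean document; each statement's English description precedes it below -/
import Mathlib

section
/- For the density g_a as above, the integral of g_a^2 over (-1/2,1/2) is strictly greater than a/8 for every a > 4. -/
open MeasureTheory

/-- The piecewise design density `g_a`: even, equal to `a/4` on `(0,1/a)`,
linear on `(1/a,2/a)`, equal to `a/(4(a-3))` on `(2/a,1/2)`, and `0` beyond `1/2`. -/
noncomputable def gdens (a x : ℝ) : ℝ :=
  if |x| < 1 / a then a / 4
  else if |x| < 2 / a then a / 4 + (|x| - 1 / a) * a * (a / (4 * (a - 3)) - a / 4)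
  else if |x| ≤ 1 / 2 then a / (4 * (a - 3))
  else 0


theorem gdens_sq_integral_gt :
    ∀ a : ℝ, 4 < a → a / 8 < ∫ x in Set.Ioo (-(1/2) : ℝ) (1/2), (gdens a x) ^ 2 := by
  intro a ha
  have ha0 : (0:ℝ) < a := by linarith
  have ha3 : (0:ℝ) < a - 3 := by linarith
  set c : ℝ := a / (4 * (a - 3)) with hc
  have hcpos : 0 < c := by positivity
  have h2a : (2:ℝ)/a < 1/2 := by rw [div_lt_div_iff₀ ha0 (by norm_num)]; linarith
  have h1a2 : (1:ℝ)/a < 2/a := by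
    rw [div_lt_div_iff₀ ha0 ha0]; nlinarith
  have hmeas : Measurable fun x : ℝ => (gdens a x)^2 := by
    unfold gdens
    apply Measurable.pow _ measurable_const
    apply Measurable.ite (measurableSet_lt (by fun_prop) measurable_const) measurable_const
    apply Measurable.ite (measurableSet_lt (by fun_prop) measurable_const) (by fun_prop)
    apply Measurable.ite (measurableSet_le (by fun_prop) measurable_const) <;> fun_prop
  have hcle : c ≤ a / 4 := by
    rw [hc, div_le_div_iff₀ (by positivity) (by norm_num)]
    nlinarith
  have hbdd : ∀ x : ℝ, ‖(gdens a x)^2‖ ≤ a^2 := by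
    intro x
    have hg : 0 ≤ gdens a x ∧ gdens a x ≤ a := by
      unfold gdens
      split_ifs with h1 h2 h3
      · constructor <;> linarith
      · push_neg at h1
        have h' : (2:ℝ)/a = 1/a + 1/a := by ring
        have hx2 : |x| - 1/a < 1/a := by linarith
        have hx1 : 0 ≤ |x| - 1/a := by linarith
        have h1aa : (1/a)*a = 1 := by field_simp
        have hfac : (|x| - 1/a)*a ≤ 1 := by
          nlinarith [mul_le_mul_of_nonneg_right hx2.le ha0.le]
        have hfac0 : 0 ≤ (|x| - 1/a)*a := mul_nonneg hx1 ha0.le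
        have hca : c - a/4 ≤ 0 := by linarith
        constructor
        · nlinarith [mul_nonneg (by linarith : (0:ℝ) ≤ 1 - (|x| - 1/a)*a) (by linarith : (0:ℝ) ≤ a/4 - c)]
        · nlinarith [mul_nonneg hfac0 (by linarith : (0:ℝ) ≤ a/4 - c)]
      · exact ⟨hcpos.le, by linarith⟩
      · constructor <;> linarith
    rw [Real.norm_eq_abs, abs_of_nonneg (by positivity)]
    nlinarith [hg.1, hg.2]
  have hintfull : ∀ s : Set ℝ, volume s ≠ ⊤ → IntegrableOn (fun x => (gdens a x)^2) s := by
    intro s hs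
    exact Measure.integrableOn_of_bounded hs hmeas.aestronglyMeasurable
      (Filter.Eventually.of_forall hbdd)
  have hvIoo : volume (Set.Ioo (-(1/2):ℝ) (1/2)) ≠ ⊤ := by
    rw [Real.volume_Ioo]; exact ENNReal.ofReal_ne_top
  have hint : IntegrableOn (fun x => (gdens a x)^2) (Set.Ioo (-(1/2):ℝ) (1/2)) :=
    hintfull _ hvIoo
  -- split
  have hsub : Set.Ioo (-(1/a):ℝ) (1/a) ⊆ Set.Ioo (-(1/2):ℝ) (1/2) := by
    apply Set.Ioo_subset_Ioo <;> nlinarith [h2a, h1a2]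
  have hsplit : Set.Ioo (-(1/2):ℝ) (1/2) =
      Set.Ioo (-(1/a):ℝ) (1/a) ∪ (Set.Ioo (-(1/2):ℝ) (1/2) \ Set.Ioo (-(1/a):ℝ) (1/a)) :=
    (Set.union_diff_cancel hsub).symm
  have hrest : IntegrableOn (fun x => (gdens a x)^2)
      (Set.Ioo (-(1/2):ℝ) (1/2) \ Set.Ioo (-(1/a):ℝ) (1/a)) :=
    hint.mono_set Set.diff_subset
  have hinner : IntegrableOn (fun x => (gdens a x)^2) (Set.Ioo (-(1/a):ℝ) (1/a)) :=
    hint.mono_set hsub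
  have heq : ∫ x in Set.Ioo (-(1/2):ℝ) (1/2), (gdens a x)^2
      = (∫ x in Set.Ioo (-(1/a):ℝ) (1/a), (gdens a x)^2)
        + ∫ x in Set.Ioo (-(1/2):ℝ) (1/2) \ Set.Ioo (-(1/a):ℝ) (1/a), (gdens a x)^2 := by
    conv_lhs => rw [hsplit]
    exact setIntegral_union Set.disjoint_sdiff_right
      (measurableSet_Ioo.diff measurableSet_Ioo) hinner hrest
  have hinnerval : ∫ x in Set.Ioo (-(1/a):ℝ) (1/a), (gdens a x)^2 = a/8 := by
    rw [setIntegral_congr_fun measurableSet_Ioo (g := fun _ => (a/4)^2)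
      (fun x hx => by
        unfold gdens
        rw [if_pos (abs_lt.mpr ⟨hx.1, hx.2⟩)])]
    rw [setIntegral_const, measureReal_def, Real.volume_Ioo, smul_eq_mul,
      ENNReal.toReal_ofReal (by have := one_div_pos.mpr ha0; linarith : (0:ℝ) ≤ 1/a - -(1/a))]
    field_simp
    ring
  have hs2sub : Set.Ioo ((2:ℝ)/a) (1/2) ⊆
      Set.Ioo (-(1/2):ℝ) (1/2) \ Set.Ioo (-(1/a):ℝ) (1/a) := by
    intro x hx
    have h0 : (0:ℝ) < 2/a := by positivity
    refine ⟨⟨by linarith [hx.1], hx.2⟩, fun hx' => ?_⟩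
    linarith [hx.1, hx'.2, h1a2]
  have hmono : ∫ x in Set.Ioo ((2:ℝ)/a) (1/2), (gdens a x)^2
      ≤ ∫ x in Set.Ioo (-(1/2):ℝ) (1/2) \ Set.Ioo (-(1/a):ℝ) (1/a), (gdens a x)^2 :=
    setIntegral_mono_set hrest (Filter.Eventually.of_forall fun x => by positivity)
      (HasSubset.Subset.eventuallyLE hs2sub)
  have houter : ∫ x in Set.Ioo ((2:ℝ)/a) (1/2), (gdens a x)^2 = (1/2 - 2/a) * c^2 := by
    rw [setIntegral_congr_fun measurableSet_Ioo (g := fun _ => c^2)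
      (fun x hx => by
        have h0 : (0:ℝ) < 2/a := by positivity
        have habs : |x| = x := abs_of_pos (by linarith [hx.1])
        unfold gdens
        rw [if_neg (by rw [habs]; push_neg; linarith [hx.1, h1a2]),
          if_neg (by rw [habs]; push_neg; linarith [hx.1]),
          if_pos (by rw [habs]; linarith [hx.2])])]
    rw [setIntegral_const, measureReal_def, Real.volume_Ioo, smul_eq_mul,
      ENNReal.toReal_ofReal (by linarith : (0:ℝ) ≤ 1/2 - 2/a)]
  have houterpos : 0 < (1/2 - 2/a) * c^2 := by
    apply mul_pos (by linarith) (by positivity)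
  rw [heq, hinnerval]
  linarith [houter ▸ hmono]
end

section
/- For the density g_a as above, the integral of g_a^3 over (-1/2,1/2) is strictly less than 2·((a/4)^3·(2/a) + b^3·(1/2 - 2/a)) where b = a/(4(a-3)), and hence the integral of g_a^3 is O(a^2) while (∫ g_a^2)^3 grows at least like a^3/8^3; in particular, the ratio (∫ g_a^3)/(∫ g_a^2)^3 tends to 0 as a → ∞. -/
open MeasureTheory

lemma measurable_gdens (a : ℝ) : Measurable (gdens a) := by
  unfold gdens
  apply Measurable.ite (measurableSet_lt (measurable_abs) measurable_const) measurable_const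
  apply Measurable.ite (measurableSet_lt (measurable_abs) measurable_const)
  · exact measurable_const.add (((measurable_abs.sub measurable_const).mul measurable_const).mul measurable_const)
  exact Measurable.ite (measurableSet_le (measurable_abs) measurable_const) measurable_const measurable_const

lemma gdens_bounds (a x : ℝ) (ha : 4 < a) : 0 ≤ gdens a x ∧ gdens a x ≤ a / 4 := by
  have ha0 : (0:ℝ) < a := by linarith
  have ha3 : (0:ℝ) < a - 3 := by linarith
  have hB : 0 < a / (4 * (a - 3)) := by positivity
  have hBAle : a / (4 * (a - 3)) - a / 4 ≤ 0 := by
    rw [sub_nonpos, div_le_div_iff₀ (by positivity) (by norm_num)]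
    nlinarith
  unfold gdens
  split_ifs with h1 h2 h3
  · constructor <;> linarith
  · push_neg at h1
    have hu1 : 1 ≤ |x| * a := by
      rw [div_le_iff₀ ha0] at h1; linarith
    have hu2 : |x| * a < 2 := by
      rw [lt_div_iff₀ ha0] at h2; linarith
    have hexp : (|x| - 1/a) * a = |x| * a - 1 := by field_simp
    rw [hexp]
    constructor
    · nlinarith
    · nlinarith
  · exact ⟨hB.le, by linarith⟩
  · constructor <;> linarith

lemma intervalIntegrable_gdens_pow (a : ℝ) (ha : 4 < a) (n : ℕ) (u v : ℝ) :
    IntervalIntegrable (fun x => gdens a x ^ n) volume u v := by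
  have key : ∀ p q : ℝ, IntegrableOn (fun x => gdens a x ^ n) (Set.Ioc p q) volume := by
    intro p q
    apply Measure.integrableOn_of_bounded (M := (a/4)^n) measure_Ioc_lt_top.ne
      ((measurable_gdens a).pow_const n).aestronglyMeasurable
    filter_upwards with x
    rw [Real.norm_eq_abs, abs_pow, abs_of_nonneg (gdens_bounds a x ha).1]
    exact pow_le_pow_left₀ (gdens_bounds a x ha).1 (gdens_bounds a x ha).2 n
  exact ⟨key u v, key v u⟩

lemma integral_congr_Ioo {f g : ℝ → ℝ} {u v : ℝ} (huv : u ≤ v)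
    (h : ∀ x ∈ Set.Ioo u v, f x = g x) :
    ∫ x in u..v, f x = ∫ x in u..v, g x := by
  rw [intervalIntegral.integral_of_le huv, intervalIntegral.integral_of_le huv,
    integral_Ioc_eq_integral_Ioo, integral_Ioc_eq_integral_Ioo]
  exact setIntegral_congr_fun measurableSet_Ioo h

lemma integral_linear_pow (c d u v : ℝ) (n : ℕ) (hd : d ≠ 0) :
    ∫ x in u..v, (c + (x - u) * d) ^ n
      = ((c + (v - u) * d) ^ (n + 1) - c ^ (n + 1)) / (((n + 1 : ℕ) : ℝ) * d) := by
  have hn : ((n:ℝ) + 1) ≠ 0 := by positivity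
  have hderiv : ∀ x ∈ Set.uIcc u v,
      HasDerivAt (fun y => (c + (y - u) * d) ^ (n + 1) / (((n + 1 : ℕ) : ℝ) * d))
        ((c + (x - u) * d) ^ n) x := by
    intro x _
    have h1 : HasDerivAt (fun y => c + (y - u) * d) d x := by
      simpa using (((hasDerivAt_id x).sub_const u).mul_const d).const_add c
    have h2 : HasDerivAt (fun y => (c + (y - u) * d) ^ (n + 1) / (((n + 1 : ℕ) : ℝ) * d))
        (((n + 1 : ℕ) : ℝ) * (c + (x - u) * d) ^ (n + 1 - 1) * d / (((n + 1 : ℕ) : ℝ) * d)) x :=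
      (h1.pow (n + 1)).div_const (((n + 1 : ℕ) : ℝ) * d)
    convert h2 using 1
    push_cast
    field_simp
  rw [intervalIntegral.integral_eq_sub_of_hasDerivAt hderiv
    (((continuous_const.add ((continuous_id.sub continuous_const).mul continuous_const)).pow n).intervalIntegrable u v)]
  simp only [sub_self, zero_mul, add_zero, div_sub_div_same]

lemma gdens_integral (a : ℝ) (ha : 4 < a) (n : ℕ) :
    ∫ x in Set.Ioo (-(1/2) : ℝ) (1/2), gdens a x ^ n
      = (a/4)^n * (2/a)
        + 2 * (((a/(4*(a-3)))^(n+1) - (a/4)^(n+1))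
            / (((n + 1 : ℕ) : ℝ) * (a * (a/(4*(a-3)) - a/4))))
        + (a/(4*(a-3)))^n * (2 * (1/2 - 2/a)) := by
  have ha0 : (0:ℝ) < a := by linarith
  have ha3 : (0:ℝ) < a - 3 := by linarith
  have hB : 0 < a / (4 * (a - 3)) := by positivity
  have hBA : a / (4 * (a - 3)) < a / 4 := by
    rw [div_lt_div_iff₀ (by positivity) (by norm_num)]
    nlinarith
  have hd : a * (a / (4 * (a - 3)) - a / 4) ≠ 0 :=
    mul_ne_zero ha0.ne' (sub_ne_zero.mpr hBA.ne)
  have h1a : (0:ℝ) < 1/a := by positivity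
  have h12' : (1:ℝ)/a < 2/a := by
    rw [div_lt_div_iff₀ ha0 ha0]; linarith
  have h2h : (2:ℝ)/a < 1/2 := by
    rw [div_lt_div_iff₀ ha0 (by norm_num)]; linarith
  have hI := fun u v => intervalIntegrable_gdens_pow a ha n u v
  have hsymm : ∀ u v : ℝ, (∫ x in u..v, gdens a x ^ n) = ∫ x in -v..(-u), gdens a x ^ n := by
    intro u v
    rw [← intervalIntegral.integral_comp_neg (f := fun x => gdens a x ^ n)]
    have : ∀ x : ℝ, gdens a (-x) ^ n = gdens a x ^ n := by
      intro x; simp [gdens, abs_neg]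
    simp only [this]
  -- piece values
  have hP1 : (∫ x in (-(1/a))..(1/a), gdens a x ^ n) = (a/4)^n * (2/a) := by
    rw [integral_congr_Ioo (by linarith) (g := fun _ => (a/4)^n)
      (fun x hx => by
        have : |x| < 1/a := abs_lt.mpr ⟨hx.1, hx.2⟩
        unfold gdens
        rw [if_pos this])]
    rw [intervalIntegral.integral_const, smul_eq_mul]
    ring
  have hP2 : (∫ x in (1/a)..(2/a), gdens a x ^ n)
      = ((a/(4*(a-3)))^(n+1) - (a/4)^(n+1)) / (((n + 1 : ℕ) : ℝ) * (a * (a/(4*(a-3)) - a/4))) := by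
    rw [integral_congr_Ioo h12'.le
      (g := fun x => (a/4 + (x - 1/a) * (a * (a/(4*(a-3)) - a/4)))^n)
      (fun x hx => by
        have hx0 : 0 < x := lt_trans h1a hx.1
        have habs : |x| = x := abs_of_pos hx0
        unfold gdens
        rw [habs, if_neg (not_lt.mpr hx.1.le), if_pos hx.2]
        ring)]
    rw [integral_linear_pow _ _ _ _ n hd]
    have he : a/4 + (2/a - 1/a) * (a * (a/(4*(a-3)) - a/4)) = a/(4*(a-3)) := by
      field_simp
      ring
    rw [he]
  have hP3 : (∫ x in (2/a)..(1/2:ℝ), gdens a x ^ n) = (a/(4*(a-3)))^n * (1/2 - 2/a) := by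
    rw [integral_congr_Ioo h2h.le (g := fun _ => (a/(4*(a-3)))^n)
      (fun x hx => by
        have hx2 : 2/a < x := hx.1
        have hx0 : 0 < x := lt_trans (by positivity) hx2
        have habs : |x| = x := abs_of_pos hx0
        have hn1 : ¬ (x < 1/a) := not_lt.mpr (by linarith)
        have hn2 : ¬ (x < 2/a) := not_lt.mpr hx2.le
        unfold gdens
        rw [habs, if_neg hn1, if_neg hn2, if_pos hx.2.le])]
    rw [intervalIntegral.integral_const, smul_eq_mul]
    ring
  rw [← integral_Ioc_eq_integral_Ioo,
    ← intervalIntegral.integral_of_le (by linarith : -(1/2:ℝ) ≤ 1/2),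
    ← intervalIntegral.integral_add_adjacent_intervals (hI (-(1/2)) (-(2/a))) (hI (-(2/a)) (1/2)),
    ← intervalIntegral.integral_add_adjacent_intervals (hI (-(2/a)) (-(1/a))) (hI (-(1/a)) (1/2)),
    ← intervalIntegral.integral_add_adjacent_intervals (hI (-(1/a)) (1/a)) (hI (1/a) (1/2)),
    ← intervalIntegral.integral_add_adjacent_intervals (hI (1/a) (2/a)) (hI (2/a) (1/2)),
    ← hsymm (2/a) (1/2), ← hsymm (1/a) (2/a), hP1, hP2, hP3]
  ring

lemma gdens_claim1 (a : ℝ) (ha : 4 < a) :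
    ∫ x in Set.Ioo (-(1/2) : ℝ) (1/2), (gdens a x) ^ 3 <
        2 * ((a / 4) ^ 3 * (2 / a) + (a / (4 * (a - 3))) ^ 3 * (1 / 2 - 2 / a)) := by
  have ha0 : (0:ℝ) < a := by linarith
  have ha3 : (0:ℝ) < a - 3 := by linarith
  have hB : 0 < a / (4 * (a - 3)) := by positivity
  have hBA : a / (4 * (a - 3)) < a / 4 := by
    rw [div_lt_div_iff₀ (by positivity) (by norm_num)]; nlinarith
  have hd : a * (a / (4 * (a - 3)) - a / 4) ≠ 0 :=
    mul_ne_zero ha0.ne' (sub_ne_zero.mpr hBA.ne)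
  have hden : ((3 + 1 : ℕ) : ℝ) * (a * (a/(4*(a-3)) - a/4)) ≠ 0 := by
    push_cast; exact mul_ne_zero (by norm_num) hd
  have hJ : ((a/(4*(a-3)))^(3+1) - (a/4)^(3+1)) / (((3 + 1 : ℕ) : ℝ) * (a * (a/(4*(a-3)) - a/4)))
      = ((a/4)^3 + (a/4)^2*(a/(4*(a-3))) + (a/4)*(a/(4*(a-3)))^2 + (a/(4*(a-3)))^3) / (4*a) := by
    rw [div_eq_div_iff hden (by positivity)]
    push_cast; ring
  rw [gdens_integral a ha 3, hJ, ← sub_pos]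
  have key : (a/4)^2*(a/(4*(a-3))) + (a/4)*(a/(4*(a-3)))^2 + (a/(4*(a-3)))^3 < 3*(a/4)^3 := by
    nlinarith [mul_pos (sub_pos.mpr hBA)
      (show (0:ℝ) < 3*(a/4)^2 + 2*(a/4)*(a/(4*(a-3))) + (a/(4*(a-3)))^2 by positivity)]
  have hrw : 2 * ((a / 4) ^ 3 * (2 / a) + (a / (4 * (a - 3))) ^ 3 * (1 / 2 - 2 / a))
      - ((a/4)^3 * (2/a)
        + 2 * (((a/4)^3 + (a/4)^2*(a/(4*(a-3))) + (a/4)*(a/(4*(a-3)))^2 + (a/(4*(a-3)))^3) / (4*a))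
        + (a/(4*(a-3)))^3 * (2 * (1/2 - 2/a)))
      = (3*(a/4)^3 - ((a/4)^2*(a/(4*(a-3))) + (a/4)*(a/(4*(a-3)))^2 + (a/(4*(a-3)))^3)) / (2*a) := by
    field_simp
    ring
  rw [hrw]
  exact div_pos (by linarith) (by linarith)

lemma gdens_I3_le (a : ℝ) (ha5 : 5 ≤ a) :
    ∫ x in Set.Ioo (-(1/2) : ℝ) (1/2), (gdens a x) ^ 3 ≤ 2 * a ^ 2 := by
  have ha : (4:ℝ) < a := by linarith
  have ha0 : (0:ℝ) < a := by linarith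
  have ha3 : (0:ℝ) < a - 3 := by linarith
  have hB : 0 < a / (4 * (a - 3)) := by positivity
  have hBA : a / (4 * (a - 3)) < a / 4 := by
    rw [div_lt_div_iff₀ (by positivity) (by norm_num)]; nlinarith
  have hd : a * (a / (4 * (a - 3)) - a / 4) ≠ 0 :=
    mul_ne_zero ha0.ne' (sub_ne_zero.mpr hBA.ne)
  have hden : ((3 + 1 : ℕ) : ℝ) * (a * (a/(4*(a-3)) - a/4)) ≠ 0 := by
    push_cast; exact mul_ne_zero (by norm_num) hd
  have hJ : ((a/(4*(a-3)))^(3+1) - (a/4)^(3+1)) / (((3 + 1 : ℕ) : ℝ) * (a * (a/(4*(a-3)) - a/4)))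
      = ((a/4)^3 + (a/4)^2*(a/(4*(a-3))) + (a/4)*(a/(4*(a-3)))^2 + (a/(4*(a-3)))^3) / (4*a) := by
    rw [div_eq_div_iff hden (by positivity)]
    push_cast; ring
  rw [gdens_integral a ha 3, hJ]
  have e1 : (a/4)^3 * (2/a) = a^2/32 := by field_simp; ring
  have hBle : a / (4 * (a - 3)) ≤ 1 := by
    rw [div_le_one (by positivity)]; linarith
  have hB3 : (a/(4*(a-3)))^3 ≤ 1 := by
    nlinarith [mul_nonneg (mul_nonneg hB.le hB.le) hB.le, sq_nonneg (a/(4*(a-3)))]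
  have h2a : (2:ℝ)/a ≤ 1/2 := by rw [div_le_div_iff₀ ha0 (by norm_num)]; linarith
  have hterm3 : (a/(4*(a-3)))^3 * (2 * (1/2 - 2/a)) ≤ 1 := by
    have h1 : 2 * (1/2 - 2/a) ≤ 1 := by
      have : (0:ℝ) < 2/a := by positivity
      linarith
    have h0 : 0 ≤ 2 * (1/2 - 2/a) := by linarith
    calc (a/(4*(a-3)))^3 * (2 * (1/2 - 2/a)) ≤ 1 * 1 :=
          mul_le_mul hB3 h1 h0 (by norm_num)
      _ = 1 := by norm_num
  have t1 : (a/4)^2 * (a/(4*(a-3))) ≤ (a/4)^2 * (a/4) :=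
    mul_le_mul_of_nonneg_left hBA.le (sq_nonneg (a/4))
  have t2 : (a/4) * (a/(4*(a-3)))^2 ≤ (a/4) * (a/4)^2 :=
    mul_le_mul_of_nonneg_left (pow_le_pow_left₀ hB.le hBA.le 2) (by positivity)
  have t3 : (a/(4*(a-3)))^3 ≤ (a/4)^3 := pow_le_pow_left₀ hB.le hBA.le 3
  have hS : (a/4)^3 + (a/4)^2*(a/(4*(a-3))) + (a/4)*(a/(4*(a-3)))^2 + (a/(4*(a-3)))^3
      ≤ 4 * (a/4)^3 := by nlinarith [t1, t2, t3]
  have hJle : 2 * (((a/4)^3 + (a/4)^2*(a/(4*(a-3))) + (a/4)*(a/(4*(a-3)))^2 + (a/(4*(a-3)))^3) / (4*a))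
      ≤ a^2/16 := by
    rw [show (2:ℝ) * (((a/4)^3 + (a/4)^2*(a/(4*(a-3))) + (a/4)*(a/(4*(a-3)))^2 + (a/(4*(a-3)))^3) / (4*a))
        = ((a/4)^3 + (a/4)^2*(a/(4*(a-3))) + (a/4)*(a/(4*(a-3)))^2 + (a/(4*(a-3)))^3) / (2*a) by ring,
      div_le_div_iff₀ (by positivity) (by norm_num : (0:ℝ) < 16)]
    nlinarith [hS, pow_pos ha0 3]
  nlinarith [e1, hJle, hterm3, sq_nonneg a, ha5]

lemma gdens_I2_ge (a : ℝ) (ha5 : 5 ≤ a) :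
    a / 8 ≤ ∫ x in Set.Ioo (-(1/2) : ℝ) (1/2), (gdens a x) ^ 2 := by
  have ha : (4:ℝ) < a := by linarith
  have ha0 : (0:ℝ) < a := by linarith
  have ha3 : (0:ℝ) < a - 3 := by linarith
  have hB : 0 < a / (4 * (a - 3)) := by positivity
  have hBA : a / (4 * (a - 3)) < a / 4 := by
    rw [div_lt_div_iff₀ (by positivity) (by norm_num)]; nlinarith
  rw [gdens_integral a ha 2]
  have e1 : (a/4)^2 * (2/a) = a/8 := by field_simp; ring
  have hJpos : 0 ≤ ((a/(4*(a-3)))^(2+1) - (a/4)^(2+1))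
      / (((2 + 1 : ℕ) : ℝ) * (a * (a/(4*(a-3)) - a/4))) := by
    apply le_of_lt
    rw [div_pos_iff]
    right
    constructor
    · have := pow_lt_pow_left₀ hBA hB.le (three_ne_zero)
      norm_num at this ⊢
      linarith
    · push_cast
      have hneg : a/(4*(a-3)) - a/4 < 0 := by linarith
      nlinarith
  have h2a : (2:ℝ)/a ≤ 1/2 := by rw [div_le_div_iff₀ ha0 (by norm_num)]; linarith
  have hBterm : 0 ≤ (a/(4*(a-3)))^2 * (2 * (1/2 - 2/a)) :=
    mul_nonneg (sq_nonneg _) (by linarith)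
  linarith [e1, hJpos, hBterm]

theorem gdens_cube_integral_lt_and_ratio_tendsto_zero :
    (∀ a : ℝ, 4 < a →
      ∫ x in Set.Ioo (-(1/2) : ℝ) (1/2), (gdens a x) ^ 3 <
        2 * ((a / 4) ^ 3 * (2 / a) + (a / (4 * (a - 3))) ^ 3 * (1 / 2 - 2 / a))) ∧
    (∃ C > 0, ∀ᶠ a in Filter.atTop,
      ∫ x in Set.Ioo (-(1/2) : ℝ) (1/2), (gdens a x) ^ 3 ≤ C * a ^ 2) ∧
    (∀ᶠ a in Filter.atTop,
      a ^ 3 / 8 ^ 3 ≤ (∫ x in Set.Ioo (-(1/2) : ℝ) (1/2), (gdens a x) ^ 2) ^ 3) ∧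
    Filter.Tendsto
      (fun a : ℝ =>
        (∫ x in Set.Ioo (-(1/2) : ℝ) (1/2), (gdens a x) ^ 3) /
          (∫ x in Set.Ioo (-(1/2) : ℝ) (1/2), (gdens a x) ^ 2) ^ 3)
      Filter.atTop (nhds 0) := by
  refine ⟨fun a ha => gdens_claim1 a ha, ⟨2, by norm_num, ?_⟩, ?_, ?_⟩
  · filter_upwards [Filter.eventually_ge_atTop (5:ℝ)] with a ha5
    exact gdens_I3_le a ha5
  · filter_upwards [Filter.eventually_ge_atTop (5:ℝ)] with a ha5
    have h2 := gdens_I2_ge a ha5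
    calc a^3/8^3 = (a/8)^3 := by ring
      _ ≤ _ := pow_le_pow_left₀ (by linarith) h2 3
  · apply squeeze_zero' (g := fun a : ℝ => 1024 / a)
    · filter_upwards [Filter.eventually_ge_atTop (5:ℝ)] with a ha5
      have ha0 : (0:ℝ) < a := by linarith
      have h2 := gdens_I2_ge a ha5
      apply div_nonneg
      · exact setIntegral_nonneg measurableSet_Ioo
          (fun x _ => pow_nonneg (gdens_bounds a x (by linarith)).1 3)
      · exact pow_nonneg (by linarith) 3
    · filter_upwards [Filter.eventually_ge_atTop (5:ℝ)] with a ha5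
      have ha0 : (0:ℝ) < a := by linarith
      have h3 := gdens_I3_le a ha5
      have h2 := gdens_I2_ge a ha5
      have hc : (0:ℝ) < a^3/512 := by positivity
      have h2' : a^3/512 ≤ (∫ x in Set.Ioo (-(1/2) : ℝ) (1/2), (gdens a x) ^ 2) ^ 3 := by
        calc a^3/512 = (a/8)^3 := by ring
          _ ≤ _ := pow_le_pow_left₀ (by linarith) h2 3
      calc (∫ x in Set.Ioo (-(1/2) : ℝ) (1/2), (gdens a x) ^ 3) /
            (∫ x in Set.Ioo (-(1/2) : ℝ) (1/2), (gdens a x) ^ 2) ^ 3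
          ≤ (2*a^2) / (a^3/512) := div_le_div₀ (by positivity) h3 hc h2'
        _ = 1024 / a := by field_simp; ring
    · exact tendsto_const_nhds.div_atTop Filter.tendsto_id
end

section
/- If a_n → 0⁺ and R_0 is a bounded convex open subset of ℝ^d with nonempty interior, then the number of cubes of the lattice a_n·ℤ^d that intersect both R_0 and its complement is O(a_n^{-(d-1)}) as n → ∞. -/
open Filter MeasureTheory Set

lemma pow_sub_pow_aux (n : ℕ) : ∀ x y : ℝ, 0 ≤ y → y ≤ x → x ≤ 2 →
    x ^ n - y ^ n ≤ n * 2 ^ n * (x - y) := by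
  induction n with
  | zero => intro x y _ _ _; simp
  | succ n ih =>
    intro x y hy hxy hx
    have h2 : y ^ n ≤ 2 ^ n := pow_le_pow_left₀ hy (by linarith) n
    have h3 : 0 ≤ x ^ n - y ^ n := by
      have := pow_le_pow_left₀ hy hxy n; linarith
    have key := ih x y hy hxy hx
    have : x ^ (n+1) - y ^ (n+1) = x * (x ^ n - y ^ n) + (x - y) * y ^ n := by ring
    rw [this]
    have h4 : x * (x ^ n - y ^ n) ≤ 2 * (n * 2 ^ n * (x - y)) := by
      calc x * (x ^ n - y ^ n) ≤ 2 * (x ^ n - y ^ n) := by nlinarith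
        _ ≤ 2 * (n * 2 ^ n * (x - y)) := by nlinarith
    have h5 : (x - y) * y ^ n ≤ (x - y) * 2 ^ n := by nlinarith
    have h6 : 0 ≤ (x - y) * 2 ^ n :=
      mul_nonneg (by linarith) (pow_nonneg (by norm_num) n)
    have expand : ((n:ℝ) + 1) * 2 ^ (n + 1) * (x - y)
        = 2 * ((n:ℝ) * 2 ^ n * (x - y)) + (x - y) * 2 ^ n + (x - y) * 2 ^ n := by ring
    push_cast
    linarith


/-- If `a n → 0⁺` and `R₀ ⊆ ℝ^d` is a bounded convex open nonempty set, then the number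
of cubes of the lattice `a n • ℤ^d` meeting both `R₀` and its complement is
`O(a n ^ (-(d-1)))` as `n → ∞`. -/
theorem boundary_cube_count_bigO (d : ℕ) (hd : 1 ≤ d) (R₀ : Set (Fin d → ℝ))
    (hBdd : Bornology.IsBounded R₀) (hConv : Convex ℝ R₀) (hOpen : IsOpen R₀)
    (hNe : R₀.Nonempty) (a : ℕ → ℝ) (ha : ∀ n, 0 < a n)
    (ha0 : Tendsto a atTop (nhds 0)) :
    ∃ C > 0, ∀ᶠ n in atTop,
      ((Set.ncard {k : Fin d → ℤ |
          (∃ x : Fin d → ℝ, (∀ i, a n * (k i) ≤ x i ∧ x i < a n * (k i + 1)) ∧ x ∈ R₀) ∧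
          (∃ x : Fin d → ℝ, (∀ i, a n * (k i) ≤ x i ∧ x i < a n * (k i + 1)) ∧ x ∉ R₀)} : ℝ))
        ≤ C * (a n)⁻¹ ^ (d - 1) := by
  classical
  obtain ⟨c, hc⟩ := hNe
  obtain ⟨ρ, hρ, hballc⟩ : ∃ ρ > 0, Metric.closedBall c ρ ⊆ R₀ := by
    obtain ⟨δ, hδ, hball⟩ := Metric.isOpen_iff.1 hOpen c hc
    exact ⟨δ / 2, by positivity,
      (Metric.closedBall_subset_ball (by linarith)).trans hball⟩
  have hmeas_lt : volume R₀ < ⊤ := hBdd.measure_lt_top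
  have hvolpos : 0 < volume R₀ := hOpen.measure_pos volume ⟨c, hc⟩
  obtain ⟨V, hVdef⟩ : ∃ v : ℝ, v = (volume R₀).toReal := ⟨_, rfl⟩
  have hV : 0 < V := hVdef ▸ ENNReal.toReal_pos hvolpos.ne' hmeas_lt.ne
  have hofV : ENNReal.ofReal V = volume R₀ := by
    rw [hVdef, ENNReal.ofReal_toReal hmeas_lt.ne]
  refine ⟨(d * 2 ^ d * 2 * V) / ρ, by positivity, ?_⟩
  filter_upwards [ha0.eventually_lt_const hρ] with n hn
  have ha' : 0 < a n := ha n
  obtain ⟨ε, hεdef⟩ : ∃ e : ℝ, e = a n / ρ := ⟨_, rfl⟩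
  have hε0 : 0 < ε := hεdef ▸ div_pos ha' hρ
  have hε1 : ε < 1 := hεdef ▸ (div_lt_one hρ).2 hn
  have h1ε : (0:ℝ) < 1 + ε := by linarith
  set S : Set (Fin d → ℤ) := {k : Fin d → ℤ |
      (∃ x : Fin d → ℝ, (∀ i, a n * (k i) ≤ x i ∧ x i < a n * (k i + 1)) ∧ x ∈ R₀) ∧
      (∃ x : Fin d → ℝ, (∀ i, a n * (k i) ≤ x i ∧ x i < a n * (k i + 1)) ∧ x ∉ R₀)} with hSdef
  rcases S.finite_or_infinite with hfin | hinf
  swap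
  · rw [hinf.ncard]
    push_cast
    positivity
  set F : Finset (Fin d → ℤ) := hfin.toFinset with hFdef
  set cube : (Fin d → ℤ) → Set (Fin d → ℝ) :=
    fun k => Set.univ.pi fun i => Set.Ico (a n * k i) (a n * (k i + 1)) with hcubedef
  have hcube_mem : ∀ k (x : Fin d → ℝ),
      x ∈ cube k ↔ ∀ i, a n * k i ≤ x i ∧ x i < a n * (k i + 1) := by
    intro k x; simp [hcubedef, Set.mem_pi, Set.mem_Ico]
  have hcube_meas : ∀ k, MeasurableSet (cube k) :=
    fun k => MeasurableSet.univ_pi fun i => measurableSet_Ico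
  have hcube_vol : ∀ k, volume (cube k) = ENNReal.ofReal (a n ^ d) := by
    intro k
    rw [hcubedef]
    rw [volume_pi_pi]
    have h1 : ∀ i : Fin d, a n * ((k i : ℝ) + 1) - a n * (k i) = a n := fun i => by ring
    simp only [Real.volume_Ico, h1]
    rw [Finset.prod_const, ← ENNReal.ofReal_pow ha'.le]
    simp
  have hfloor : ∀ k (x : Fin d → ℝ), x ∈ cube k → ∀ i, k i = ⌊x i / a n⌋ := by
    intro k x hx i
    obtain ⟨h1, h2⟩ := (hcube_mem k x).1 hx i
    symm
    rw [Int.floor_eq_iff]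
    constructor
    · rw [le_div_iff₀ ha']; linarith
    · rw [div_lt_iff₀ ha']; push_cast; linarith
  have hdisjF : (F : Set (Fin d → ℤ)).PairwiseDisjoint cube := by
    intro k _ k' _ hkk'
    refine Set.disjoint_left.2 fun x hx hx' => hkk' ?_
    funext i
    rw [hfloor k x hx i, hfloor k' x hx' i]
  obtain ⟨φp, hφpdef⟩ : ∃ f : (Fin d → ℝ) → (Fin d → ℝ),
      f = fun x => (1 + ε) • (x - c) + c := ⟨_, rfl⟩
  obtain ⟨φm, hφmdef⟩ : ∃ f : (Fin d → ℝ) → (Fin d → ℝ),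
      f = fun x => (1 - ε) • (x - c) + c := ⟨_, rfl⟩
  have hcube_dist : ∀ k, ∀ x ∈ cube k, ∀ y ∈ cube k, ‖y - x‖ ≤ a n := by
    intro k x hx y hy
    rw [pi_norm_le_iff_of_nonneg ha'.le]
    intro i
    obtain ⟨hx1, hx2⟩ := (hcube_mem k x).1 hx i
    obtain ⟨hy1, hy2⟩ := (hcube_mem k y).1 hy i
    rw [Pi.sub_apply, Real.norm_eq_abs, abs_le]
    constructor <;> linarith
  have hu_mem : ∀ x y : Fin d → ℝ, ‖y - x‖ ≤ a n → c + (ρ / a n) • (y - x) ∈ R₀ := by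
    intro x y h
    apply hballc
    rw [Metric.mem_closedBall, dist_eq_norm]
    have h2 : c + (ρ / a n) • (y - x) - c = (ρ / a n) • (y - x) := by abel
    rw [h2, norm_smul, Real.norm_eq_abs, abs_of_pos (by positivity)]
    calc ρ / a n * ‖y - x‖ ≤ ρ / a n * a n :=
          mul_le_mul_of_nonneg_left h (by positivity)
      _ = ρ := by field_simp
  have hsub_big : ∀ k ∈ S, cube k ⊆ φp '' R₀ := by
    intro k hk y hy
    obtain ⟨⟨x, hxcube, hxR⟩, -⟩ := hk
    have hxc : x ∈ cube k := (hcube_mem k x).2 hxcube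
    have hdxy : ‖y - x‖ ≤ a n := hcube_dist k x hxc y hy
    have hu : c + (ρ / a n) • (y - x) ∈ R₀ := hu_mem x y hdxy
    refine ⟨(1 / (1 + ε)) • x + (ε / (1 + ε)) • (c + (ρ / a n) • (y - x)),
      hConv hxR hu (by positivity) (by positivity) (by field_simp), ?_⟩
    rw [hφpdef, hεdef]
    funext i
    simp only [Pi.add_apply, Pi.smul_apply, Pi.sub_apply, smul_eq_mul]
    field_simp
    ring
  have hdisj_small : ∀ k ∈ S, Disjoint (cube k) (φm '' R₀) := by
    intro k hk
    obtain ⟨-, ⟨y, hycube, hyR⟩⟩ := hk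
    have hyc : y ∈ cube k := (hcube_mem k y).2 hycube
    rw [Set.disjoint_left]
    rintro p hp ⟨w, hw, rfl⟩
    apply hyR
    have hdyp : ‖y - φm w‖ ≤ a n := hcube_dist k (φm w) hp y hyc
    have hu : c + (ρ / a n) • (y - φm w) ∈ R₀ := hu_mem (φm w) y hdyp
    have hkey : y = (1 - ε) • w + ε • (c + (ρ / a n) • (y - φm w)) := by
      rw [hφmdef, hεdef]
      funext i
      simp only [Pi.add_apply, Pi.smul_apply, Pi.sub_apply, smul_eq_mul]
      field_simp
      ring
    rw [hkey]
    exact hConv hw hu (by linarith) hε0.le (by ring)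
  have hsmall_sub : φm '' R₀ ⊆ φp '' R₀ := by
    rintro p ⟨w, hw, rfl⟩
    have ht0 : (0:ℝ) ≤ (1 - ε) / (1 + ε) := by
      apply div_nonneg <;> linarith
    have ht1 : (1 - ε) / (1 + ε) ≤ 1 := by
      rw [div_le_one h1ε]; linarith
    refine ⟨((1 - ε) / (1 + ε)) • w + (1 - (1 - ε) / (1 + ε)) • c,
      hConv hw hc ht0 (by linarith) (by ring), ?_⟩
    rw [hφpdef, hφmdef]
    funext i
    simp only [Pi.add_apply, Pi.smul_apply, Pi.sub_apply, smul_eq_mul]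
    field_simp
    ring
  have hfinrank : Module.finrank ℝ (Fin d → ℝ) = d := Module.finrank_fin_fun ℝ
  have hvol_img : ∀ t : ℝ, 0 ≤ t →
      volume ((fun x : Fin d → ℝ => t • (x - c) + c) '' R₀)
        = ENNReal.ofReal (t ^ d) * volume R₀ := by
    intro t ht
    have himg : (fun x : Fin d → ℝ => t • (x - c) + c) '' R₀
        = AffineMap.homothety c t '' R₀ := by
      apply Set.image_congr'
      intro x
      simp [AffineMap.homothety_apply, vsub_eq_sub, vadd_eq_add]
    rw [himg, Measure.addHaar_image_homothety, hfinrank, abs_of_nonneg (pow_nonneg ht d)]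
  have hvol_big : volume (φp '' R₀) = ENNReal.ofReal ((1 + ε) ^ d) * volume R₀ := by
    rw [hφpdef]; exact hvol_img (1 + ε) h1ε.le
  have hvol_small : volume (φm '' R₀) = ENNReal.ofReal ((1 - ε) ^ d) * volume R₀ := by
    rw [hφmdef]; exact hvol_img (1 - ε) (by linarith)
  have hUmeas : MeasurableSet (⋃ k ∈ F, cube k) :=
    F.measurableSet_biUnion fun k _ => hcube_meas k
  have hUsub : (⋃ k ∈ F, cube k) ⊆ φp '' R₀ := by
    refine Set.iUnion₂_subset fun k hk => hsub_big k ?_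
    rwa [hFdef, Set.Finite.mem_toFinset] at hk
  have hUdisj : Disjoint (φm '' R₀) (⋃ k ∈ F, cube k) := by
    rw [Set.disjoint_iff_inter_eq_empty, Set.inter_iUnion₂]
    simp only [Set.iUnion_eq_empty]
    intro k
    by_cases hk : k ∈ F
    · have h5 := hdisj_small k (by rwa [hFdef, Set.Finite.mem_toFinset] at hk)
      rw [Set.disjoint_iff_inter_eq_empty] at h5
      simp [hk, Set.inter_comm, h5]
    · simp [hk]
  have key : volume (φm '' R₀) + volume (⋃ k ∈ F, cube k) ≤ volume (φp '' R₀) := by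
    rw [← measure_union hUdisj hUmeas]
    exact measure_mono (Set.union_subset hsmall_sub hUsub)
  have hsum : volume (⋃ k ∈ F, cube k) = F.card * ENNReal.ofReal (a n ^ d) := by
    rw [measure_biUnion_finset hdisjF fun k _ => hcube_meas k]
    rw [Finset.sum_congr rfl fun k _ => hcube_vol k, Finset.sum_const, nsmul_eq_mul]
  rw [hsum, hvol_big, hvol_small] at key
  have key' : ENNReal.ofReal ((1 - ε) ^ d * V + F.card * a n ^ d)
      ≤ ENNReal.ofReal ((1 + ε) ^ d * V) := by
    rw [ENNReal.ofReal_add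
        (mul_nonneg (pow_nonneg (by linarith : (0:ℝ) ≤ 1 - ε) d) hV.le)
        (mul_nonneg (Nat.cast_nonneg _) (pow_nonneg ha'.le d)),
      ENNReal.ofReal_mul (pow_nonneg (by linarith : (0:ℝ) ≤ 1 - ε) d),
      ENNReal.ofReal_mul (pow_nonneg h1ε.le d),
      ENNReal.ofReal_mul (Nat.cast_nonneg _), hofV, ENNReal.ofReal_natCast]
    exact key
  have hreal : (1 - ε) ^ d * V + (F.card : ℝ) * a n ^ d ≤ (1 + ε) ^ d * V :=
    (ENNReal.ofReal_le_ofReal_iff (mul_nonneg (pow_nonneg h1ε.le d) hV.le)).1 key'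
  have hncard : (S.ncard : ℝ) = (F.card : ℝ) := by
    rw [Set.ncard_eq_toFinset_card S hfin]
  clear hsum hvol_big hvol_small key key' hUdisj hUmeas hUsub hsub_big hdisj_small
    hsmall_sub hvol_img hcube_vol hcube_mem hcube_meas hfloor hdisjF hcube_dist hu_mem
    hballc hofV hSdef hFdef hcubedef hφpdef hφmdef
  rw [hncard]
  clear_value S F cube
  clear hncard S cube hfin
  have hb := pow_sub_pow_aux d (1 + ε) (1 - ε) (by linarith) (by linarith) (by linarith)
  have h2 : (F.card : ℝ) * a n ^ d ≤ (d * 2 ^ d * 2 * V / ρ) * a n := by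
    have hstep : (F.card : ℝ) * a n ^ d ≤ ((1 + ε) ^ d - (1 - ε) ^ d) * V := by nlinarith
    have hstep2 : ((1 + ε) ^ d - (1 - ε) ^ d) * V ≤ (d * 2 ^ d * (2 * ε)) * V := by
      have h3 : (1 + ε) - (1 - ε) = 2 * ε := by ring
      rw [h3] at hb
      nlinarith
    have heq : (d * 2 ^ d * (2 * ε)) * V = (d * 2 ^ d * 2 * V / ρ) * a n := by
      rw [hεdef]; field_simp
    linarith
  have had : a n ^ d = a n ^ (d - 1) * a n := by
    rw [← pow_succ]
    congr 1
    omega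
  rw [had] at h2
  have h4 : (F.card : ℝ) * a n ^ (d - 1) ≤ d * 2 ^ d * 2 * V / ρ :=
    le_of_mul_le_mul_right (by linarith [h2]) ha'
  rw [inv_pow, ← div_eq_mul_inv, le_div_iff₀ (by positivity)]
  linarith
end

section
/- Let f be a bounded continuous probability density on ℝ^d with compact support, σ: ℝ^d → ℝ integrable and continuous, and λ_n → ∞. Then λ_n^d · ∬ σ(λ_n(x−y)) f(x) f(y) dx dy → (∫ σ(s) ds)·(∫ f(x)² dx) as n → ∞. -/
open MeasureTheory Filter

lemma cov_inner (d : ℕ) (σ f : (Fin d → ℝ) → ℝ) (c : ℝ) (hc : 0 < c) (x : Fin d → ℝ) :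
    c ^ d * ∫ y : Fin d → ℝ, σ (c • (x - y)) * f x * f y
      = ∫ s : Fin d → ℝ, σ s * f x * f (x - c⁻¹ • s) := by
  have h1 : (∫ y : Fin d → ℝ, σ (c • (x - y)) * f x * f y)
      = ∫ y : Fin d → ℝ, σ (c • y) * f x * f (x - y) := by
    have := integral_sub_left_eq_self
      (fun y : Fin d → ℝ => σ (c • y) * f x * f (x - y)) volume x
    simpa [sub_sub_cancel] using this
  have h2 : (∫ y : Fin d → ℝ, σ (c • y) * f x * f (x - y))
      = |(c ^ d)⁻¹| * ∫ s : Fin d → ℝ, σ s * f x * f (x - c⁻¹ • s) := by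
    have := Measure.integral_comp_smul (volume : Measure (Fin d → ℝ))
      (fun s : Fin d → ℝ => σ s * f x * f (x - c⁻¹ • s)) c
    simpa [smul_smul, inv_mul_cancel₀ hc.ne', smul_eq_mul] using this
  rw [h1, h2, abs_of_nonneg (inv_nonneg.2 (pow_nonneg hc.le _)), ← mul_assoc,
    mul_inv_cancel₀ (pow_pos hc d).ne', one_mul]

/-- Change of variables + dominated convergence:
`λ_n^d ∬ σ(λ_n(x−y)) f(x) f(y) dx dy → (∫σ)·(∫f²)`. -/
theorem double_integral_covariance_limit (d : ℕ) (σ f : (Fin d → ℝ) → ℝ)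
    (hσ : Integrable σ) (hσc : Continuous σ)
    (hf : Continuous f) (hfc : HasCompactSupport f)
    (hf0 : ∀ x, 0 ≤ f x) (hf1 : ∫ x, f x = 1)
    (lam : ℕ → ℝ) (hlam : ∀ n, 0 < lam n) (hlamtop : Tendsto lam atTop atTop) :
    Tendsto (fun n =>
      (lam n) ^ d * ∫ x : Fin d → ℝ, ∫ y : Fin d → ℝ, σ (lam n • (x - y)) * f x * f y)
      atTop (nhds ((∫ s, σ s) * ∫ x, (f x) ^ 2)) := by
  obtain ⟨C, hC⟩ := hf.bounded_above_of_compact_support hfc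
  have hfi : Integrable f := hf.integrable_of_hasCompactSupport hfc
  set H : ℕ → ((Fin d → ℝ) × (Fin d → ℝ)) → ℝ :=
    fun n p => σ p.2 * f p.1 * f (p.1 - (lam n)⁻¹ • p.2) with hH
  -- bound
  set bound : ((Fin d → ℝ) × (Fin d → ℝ)) → ℝ := fun p => (C * f p.1) * |σ p.2| with hb
  have hC0 : 0 ≤ C := le_trans (norm_nonneg _) (hC (Classical.arbitrary _))
  have hHcont : ∀ n, Continuous (H n) := fun n =>
    ((hσc.comp continuous_snd).mul (hf.comp continuous_fst)).mul
      (hf.comp (continuous_fst.sub (continuous_snd.const_smul (lam n)⁻¹)))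
  have hbi : Integrable bound (volume.prod volume) :=
    Integrable.mul_prod (hfi.const_mul C) hσ.abs
  have hHle : ∀ n, ∀ p : (Fin d → ℝ) × (Fin d → ℝ), ‖H n p‖ ≤ bound p := by
    intro n p
    have h1 : |f (p.1 - (lam n)⁻¹ • p.2)| ≤ C := by
      simpa [Real.norm_eq_abs] using hC (p.1 - (lam n)⁻¹ • p.2)
    calc ‖H n p‖ = |σ p.2| * |f p.1| * |f (p.1 - (lam n)⁻¹ • p.2)| := by
          simp [hH, abs_mul, Real.norm_eq_abs]
      _ ≤ |σ p.2| * |f p.1| * C := by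
          apply mul_le_mul_of_nonneg_left h1 (by positivity)
      _ = bound p := by rw [hb, abs_of_nonneg (hf0 _)]; ring
  have hHint : ∀ n, Integrable (H n) (volume.prod volume) := fun n =>
    hbi.mono' (hHcont n).aestronglyMeasurable (Filter.Eventually.of_forall (hHle n))
  -- each term equals ∫ H n
  have key : ∀ n, (lam n) ^ d * ∫ x : Fin d → ℝ, ∫ y : Fin d → ℝ,
      σ (lam n • (x - y)) * f x * f y = ∫ p, H n p ∂(volume.prod volume) := by
    intro n
    rw [← integral_const_mul]
    have : ∀ x : Fin d → ℝ, (lam n) ^ d * ∫ y : Fin d → ℝ, σ (lam n • (x - y)) * f x * f y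
        = ∫ s : Fin d → ℝ, σ s * f x * f (x - (lam n)⁻¹ • s) :=
      fun x => cov_inner d σ f (lam n) (hlam n) x
    simp_rw [this]
    exact integral_integral (hHint n)
  -- limit of ∫ H n
  have hσf2 : (∫ s, σ s) * ∫ x, (f x) ^ 2
      = ∫ p : (Fin d → ℝ) × (Fin d → ℝ), σ p.2 * f p.1 * f p.1 ∂(volume.prod volume) := by
    have := integral_prod_mul (μ := (volume : Measure (Fin d → ℝ)))
      (ν := (volume : Measure (Fin d → ℝ))) (fun x => f x ^ 2) σ
    rw [show (fun p : (Fin d → ℝ) × (Fin d → ℝ) => σ p.2 * f p.1 * f p.1)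
        = fun p => (f p.1) ^ 2 * σ p.2 from by funext p; ring, this, mul_comm]
  have hinv0 : Tendsto (fun n => (lam n)⁻¹) atTop (nhds 0) :=
    tendsto_inv_atTop_zero.comp hlamtop
  have hptwise : ∀ p : (Fin d → ℝ) × (Fin d → ℝ),
      Tendsto (fun n => H n p) atTop (nhds (σ p.2 * f p.1 * f p.1)) := by
    intro p
    have : Tendsto (fun n => p.1 - (lam n)⁻¹ • p.2) atTop (nhds p.1) := by
      have := (tendsto_const_nhds.sub (hinv0.smul_const p.2) :
        Tendsto (fun n => p.1 - (lam n)⁻¹ • p.2) atTop (nhds (p.1 - (0:ℝ) • p.2)))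
      simpa using this
    exact tendsto_const_nhds.mul (hf.continuousAt.tendsto.comp this)
  have := tendsto_integral_of_dominated_convergence bound
    (fun n => (hHcont n).aestronglyMeasurable) hbi
    (fun n => Filter.Eventually.of_forall (hHle n))
    (Filter.Eventually.of_forall hptwise)
  rw [hσf2]
  exact Tendsto.congr (fun n => (key n).symm) this
end
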